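/- Let ξ₀(s) = ∫₀¹ ((1−x)/(1+x))·s·x^{s−1} dx for s > 0. Then the function ξ₂(s) := 2s·ξ₀(s) is strictly increasing on (0,∞). -/

import Mathlib

open MeasureTheory Real Set

noncomputable def ξ₀ (s : ℝ) : ℝ :=
  ∫ x in (0:ℝ)..1, ((1 - x) / (1 + x)) * (s * x ^ (s - 1))

/-- Auxiliary function `g b = (e^b - 1)/(b (e^b + 1)) = tanh(b/2)/b`. -/
noncomputable def gAux : ℝ → ℝ := fun b => (Real.exp b - 1) / (b * (Real.exp b + 1))

lemma gAux_strictAnti : StrictAntiOn gAux (Set.Ioi 0) := by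
  apply strictAntiOn_of_deriv_neg (convex_Ioi 0)
  · apply ContinuousOn.div
    · fun_prop
    · fun_prop
    · intro b hb
      have hb' : (0:ℝ) < b := hb
      have hE := Real.exp_pos b
      positivity
  · intro b hb
    rw [interior_Ioi] at hb
    have hb' : (0:ℝ) < b := hb
    have hE := Real.exp_pos b
    have hD : b * (Real.exp b + 1) ≠ 0 := by positivity
    have h1 : HasDerivAt (fun b => Real.exp b - 1) (Real.exp b) b := by
      simpa using (Real.hasDerivAt_exp b).sub_const 1
    have h2 : HasDerivAt (fun b => b * (Real.exp b + 1))
        (1 * (Real.exp b + 1) + b * Real.exp b) b :=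
      (hasDerivAt_id b).mul ((Real.hasDerivAt_exp b).add_const 1)
    have hg : HasDerivAt gAux
        ((Real.exp b * (b * (Real.exp b + 1)) -
          (Real.exp b - 1) * (1 * (Real.exp b + 1) + b * Real.exp b)) /
          (b * (Real.exp b + 1)) ^ 2) b := h1.div h2 hD
    rw [hg.deriv]
    apply div_neg_of_neg_of_pos
    · have hs : b < Real.sinh b := Real.self_lt_sinh_iff.mpr hb'
      have hse : Real.sinh b = (Real.exp b - Real.exp (-b)) / 2 := Real.sinh_eq b
      have hne : Real.exp (-b) = (Real.exp b)⁻¹ := Real.exp_neg b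
      have hinv : Real.exp b * (Real.exp b)⁻¹ = 1 := mul_inv_cancel₀ hE.ne'
      nlinarith [mul_pos hE hE]
    · positivity

/-- The integrand after the change of variables `u = x^s`. -/
noncomputable def φAux (s u : ℝ) : ℝ := 2 * s * ((1 - u ^ (1/s)) / (1 + u ^ (1/s)))

lemma g2_contOn {s : ℝ} (hs : 0 < s) :
    ContinuousOn (fun u : ℝ => (1 - u ^ (1/s)) / (1 + u ^ (1/s))) (Set.Icc 0 1) := by
  have hc : ∀ u ∈ Set.Icc (0:ℝ) 1, ContinuousWithinAt (fun u : ℝ => u ^ (1/s)) (Set.Icc 0 1) u :=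
    fun u _ => (Real.continuousAt_rpow_const u (1/s) (Or.inr (by positivity))).continuousWithinAt
  apply ContinuousOn.div
  · exact continuousOn_const.sub hc
  · exact continuousOn_const.add hc
  · intro u hu
    have : 0 ≤ u ^ (1/s) := Real.rpow_nonneg hu.1 _
    positivity

lemma abs_g2_le {s u : ℝ} (_hs : 0 < s) (hu : 0 ≤ u) :
    |(1 - u ^ (1/s)) / (1 + u ^ (1/s))| ≤ 1 := by
  have hv : 0 ≤ u ^ (1/s) := Real.rpow_nonneg hu _
  rw [abs_div, abs_of_pos (by linarith : (0:ℝ) < 1 + u ^ (1/s)), div_le_one (by linarith)]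
  rw [abs_le]
  constructor <;> linarith

lemma xi0_eq {s : ℝ} (hs : 0 < s) :
    ξ₀ s = ∫ u in (0:ℝ)..1, (1 - u ^ (1/s)) / (1 + u ^ (1/s)) := by
  set g : ℝ → ℝ := fun u => (1 - u ^ (1/s)) / (1 + u ^ (1/s)) with hg_def
  have himage : ∀ x ∈ Set.Icc (0:ℝ) 1, x ^ s ∈ Set.Icc (0:ℝ) 1 := by
    intro x hx
    exact ⟨Real.rpow_nonneg hx.1 _, Real.rpow_le_one hx.1 hx.2 hs.le⟩
  have key := intervalIntegral.integral_comp_smul_deriv'''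
      (f := fun x : ℝ => x ^ s) (f' := fun x : ℝ => s * x ^ (s-1)) (g := g)
      (a := 0) (b := 1)
      (by
        intro x _
        exact (Real.continuousAt_rpow_const x s (Or.inr hs.le)).continuousWithinAt)
      (by
        intro x hx
        simp only [min_def, max_def] at hx
        norm_num at hx
        exact (Real.hasDerivAt_rpow_const (p := s) (Or.inl hx.1.ne')).hasDerivWithinAt)
      (by
        apply (g2_contOn hs).mono
        intro u hu
        obtain ⟨x, hx, rfl⟩ := hu
        simp only [min_def, max_def] at hx
        norm_num at hx
        exact himage x ⟨hx.1.le, hx.2.le⟩)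
      (by
        apply ((g2_contOn hs).integrableOn_Icc).mono_set
        intro u hu
        obtain ⟨x, hx, rfl⟩ := hu
        rw [Set.uIcc_of_le zero_le_one] at hx
        exact himage x hx)
      (by
        rw [Set.uIcc_of_le zero_le_one, integrableOn_Icc_iff_integrableOn_Ioc]
        have hdom : IntegrableOn (fun x : ℝ => s * x ^ (s-1)) (Set.Ioc 0 1) := by
          have h1 : IntervalIntegrable (fun x : ℝ => x ^ (s-1)) volume 0 1 :=
            intervalIntegral.intervalIntegrable_rpow' (by linarith)
          have h2 := (intervalIntegrable_iff_integrableOn_Ioc_of_le zero_le_one).mp h1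
          exact h2.const_mul s
        apply Integrable.mono' hdom
        · apply ContinuousOn.aestronglyMeasurable _ measurableSet_Ioc
          apply ContinuousOn.smul (f := fun x : ℝ => s * x ^ (s-1)) (g := g ∘ fun x : ℝ => x ^ s)
          · exact continuousOn_const.mul (fun x hx =>
              (Real.continuousAt_rpow_const x (s-1) (Or.inl hx.1.ne')).continuousWithinAt)
          · apply (g2_contOn hs).comp
            · intro x hx
              exact (Real.continuousAt_rpow_const x s (Or.inr hs.le)).continuousWithinAt
            · intro x hx
              exact himage x ⟨hx.1.le, hx.2⟩
        · rw [ae_restrict_iff' measurableSet_Ioc]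
          filter_upwards with x hx
          have hx0 : (0:ℝ) ≤ x := hx.1.le
          have hpow : 0 ≤ x ^ (s-1) := Real.rpow_nonneg hx0 _
          have hb := abs_g2_le hs (Real.rpow_nonneg hx0 s)
          simp only [Function.comp_apply, smul_eq_mul, Real.norm_eq_abs, abs_mul,
            abs_of_nonneg (by positivity : (0:ℝ) ≤ s * x ^ (s-1))]
          calc s * x ^ (s-1) * |g (x ^ s)| ≤ s * x ^ (s-1) * 1 := by
                apply mul_le_mul_of_nonneg_left hb (by positivity)
            _ = s * x ^ (s-1) := by ring)
  have h0 : (0:ℝ) ^ s = 0 := Real.zero_rpow hs.ne'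
  have h1 : (1:ℝ) ^ s = 1 := Real.one_rpow s
  simp only [h0, h1] at key
  rw [← key]
  apply intervalIntegral.integral_congr
  intro x hx
  rw [Set.uIcc_of_le zero_le_one] at hx
  have hxs : (x ^ s) ^ (1/s) = x := by
    rw [← Real.rpow_mul hx.1, mul_one_div_cancel hs.ne', Real.rpow_one]
  simp only [hg_def, Function.comp_apply, smul_eq_mul, hxs]
  ring

lemma xi2_eq {s : ℝ} (hs : 0 < s) :
    2 * s * ξ₀ s = ∫ u in (0:ℝ)..1, φAux s u := by
  rw [xi0_eq hs]
  rw [← intervalIntegral.integral_const_mul]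
  rfl

lemma phi_eq {s u : ℝ} (hs : 0 < s) (hu0 : 0 < u) (hu1 : u < 1) :
    φAux s u = 2 * (-Real.log u) * gAux (-Real.log u / s) := by
  have ha : 0 < -Real.log u := by have := Real.log_neg hu0 hu1; linarith
  set a := -Real.log u with ha_def
  have hb : 0 < a / s := div_pos ha hs
  have hE : 0 < Real.exp (a / s) := Real.exp_pos _
  have hu : u ^ (1/s) = (Real.exp (a / s))⁻¹ := by
    rw [Real.rpow_def_of_pos hu0, ← Real.exp_neg]
    congr 1
    rw [ha_def]
    field_simp
  unfold φAux gAux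
  rw [hu]
  have h1 : (1:ℝ) + (Real.exp (a/s))⁻¹ ≠ 0 := by positivity
  have h2 : Real.exp (a/s) + 1 ≠ 0 := by positivity
  field_simp

lemma phi_contOn {s : ℝ} (hs : 0 < s) : ContinuousOn (φAux s) (Set.Icc 0 1) :=
  continuousOn_const.mul (g2_contOn hs)

theorem xi2_strictMono :
    StrictMonoOn (fun s => 2 * s * ξ₀ s) (Set.Ioi 0) := by
  intro s hs s' hs' hss
  simp only [Set.mem_Ioi] at hs hs'
  simp only
  rw [xi2_eq hs, xi2_eq hs']
  have hInt : ∀ {t : ℝ}, 0 < t → IntervalIntegrable (φAux t) volume 0 1 := by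
    intro t ht
    apply ContinuousOn.intervalIntegrable
    rw [Set.uIcc_of_le zero_le_one]
    exact phi_contOn ht
  have hpos : 0 < ∫ u in (0:ℝ)..1, (φAux s' u - φAux s u) := by
    apply intervalIntegral.intervalIntegral_pos_of_pos_on ((hInt hs').sub (hInt hs)) _ zero_lt_one
    intro u hu
    rw [sub_pos, phi_eq hs hu.1 hu.2, phi_eq hs' hu.1 hu.2]
    have ha : 0 < -Real.log u := by have := Real.log_neg hu.1 hu.2; linarith
    apply mul_lt_mul_of_pos_left _ (by positivity)
    apply gAux_strictAnti (Set.mem_Ioi.mpr (div_pos ha hs')) (Set.mem_Ioi.mpr (div_pos ha hs))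
    exact div_lt_div_of_pos_left ha hs hss
  rw [intervalIntegral.integral_sub (hInt hs') (hInt hs)] at hpos
  linarith
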